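/- Let ψ₁, …, ψ_n be i.i.d. real random variables with mean μ and variance σ², and let ψ₍ₗ₎ denote the l-th largest order statistic. Then E[ψ₍ₗ₎] ≤ μ + σ·√((n−l)/l). -/

import Mathlib

open MeasureTheory ProbabilityTheory

/-- The descending rearrangement of a finite tuple of reals. -/
noncomputable def sortDesc {n : ℕ} (f : Fin n → ℝ) : Fin n → ℝ :=
  fun i => -(((fun j => -f j) ∘ Tuple.sort (fun j => -f j)) i)

namespace OSB

open Finset

variable {n : ℕ}

lemma sortDesc_apply (f : Fin n → ℝ) (i : Fin n) :
    sortDesc f i = f (Tuple.sort (fun j => -f j) i) := by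
  simp [sortDesc]

lemma sortDesc_antitone (f : Fin n → ℝ) : Antitone (sortDesc f) := by
  intro a b hab
  have h := Tuple.monotone_sort (fun j => -f j) hab
  simp only [Function.comp_apply] at h
  simp only [sortDesc, Function.comp_apply]
  linarith

lemma sortDesc_le_iff (f : Fin n → ℝ) (k : Fin n) (t : ℝ) :
    sortDesc f k ≤ t ↔ ((univ.filter fun i => t < f i).card ≤ (k : ℕ)) := by
  set σ := Tuple.sort (fun j => -f j) with hσ
  constructor
  · intro h
    calc (univ.filter fun i => t < f i).card ≤ ((Finset.Iio k).image σ).card := by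
          apply Finset.card_le_card
          intro i hi
          simp only [mem_filter, mem_univ, true_and] at hi
          have hp : σ.symm i < k := by
            by_contra hc
            push_neg at hc
            have h2 : sortDesc f (σ.symm i) ≤ sortDesc f k := sortDesc_antitone f hc
            rw [sortDesc_apply, ← hσ, Equiv.apply_symm_apply] at h2
            linarith
          exact Finset.mem_image.2 ⟨σ.symm i, Finset.mem_Iio.2 hp, σ.apply_symm_apply i⟩
      _ = (Finset.Iio k).card := Finset.card_image_of_injective _ σ.injective
      _ = k := Fin.card_Iio k
  · intro h
    by_contra hc
    push_neg at hc
    have hsub : (Finset.Iic k).image σ ⊆ univ.filter fun i => t < f i := by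
      intro i hi
      obtain ⟨p, hp, rfl⟩ := Finset.mem_image.1 hi
      simp only [mem_filter, mem_univ, true_and]
      have h2 : sortDesc f k ≤ sortDesc f p := sortDesc_antitone f (Finset.mem_Iic.1 hp)
      rw [sortDesc_apply f p, ← hσ] at h2
      linarith
    have h3 := Finset.card_le_card hsub
    rw [Finset.card_image_of_injective _ σ.injective, Fin.card_Iic] at h3
    omega

lemma measurable_sortDesc (k : Fin n) : Measurable (fun f : Fin n → ℝ => sortDesc f k) := by
  apply measurable_of_Iic
  intro t
  have heq : (fun f : Fin n → ℝ => sortDesc f k) ⁻¹' Set.Iic t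
      = (fun f : Fin n → ℝ => (univ.filter fun i => t < f i).card) ⁻¹' Set.Iic (k : ℕ) := by
    ext f
    simp [sortDesc_le_iff]
  rw [heq]
  have hm : Measurable (fun f : Fin n → ℝ => (univ.filter fun i => t < f i).card) := by
    simp_rw [Finset.card_filter]
    apply Finset.measurable_sum
    intro i _
    exact Measurable.ite (measurableSet_lt measurable_const (measurable_pi_apply i))
      measurable_const measurable_const
  exact hm measurableSet_Iic

lemma abs_sortDesc_le (f : Fin n → ℝ) (k : Fin n) : |sortDesc f k| ≤ ∑ i, |f i| := by
  rw [sortDesc_apply]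
  exact Finset.single_le_sum (fun i _ => abs_nonneg (f i)) (Finset.mem_univ _)

lemma sum_sortDesc (f : Fin n → ℝ) (g : ℝ → ℝ) :
    ∑ i, g (sortDesc f i) = ∑ i, g (f i) := by
  rw [← Equiv.sum_comp (Tuple.sort (fun j => -f j)) (fun i => g (f i))]
  exact Finset.sum_congr rfl fun i _ => by rw [sortDesc_apply]

lemma mul_sortDesc_le (f : Fin n → ℝ) (l : ℕ) (hl : 1 ≤ l) (hln : l ≤ n) (t : ℝ) :
    (l : ℝ) * (sortDesc f ⟨l - 1, Nat.sub_one_lt_of_le hl hln⟩ - t) ≤ ∑ i, max (f i - t) 0 := by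
  set k : Fin n := ⟨l - 1, Nat.sub_one_lt_of_le hl hln⟩ with hk
  have hperm : ∑ i, max (f i - t) 0 = ∑ i, max (sortDesc f i - t) 0 :=
    (sum_sortDesc f (fun x => max (x - t) 0)).symm
  rw [hperm]
  have h1 : ∑ _i ∈ Finset.Iic k, max (sortDesc f k - t) 0
      ≤ ∑ i ∈ Finset.Iic k, max (sortDesc f i - t) 0 :=
    Finset.sum_le_sum fun i hi => max_le_max
      (by have := sortDesc_antitone f (Finset.mem_Iic.1 hi); linarith) le_rfl
  have h2 : ∑ i ∈ Finset.Iic k, max (sortDesc f i - t) 0 ≤ ∑ i, max (sortDesc f i - t) 0 :=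
    Finset.sum_le_sum_of_subset_of_nonneg (Finset.subset_univ _) (fun i _ _ => le_max_right _ _)
  have h3 : (l : ℝ) * (sortDesc f k - t) ≤ ∑ _i ∈ Finset.Iic k, max (sortDesc f k - t) 0 := by
    rw [Finset.sum_const, Fin.card_Iic, nsmul_eq_mul]
    rw [show ((k : ℕ) + 1) = l by simp [hk]; omega]
    exact mul_le_mul_of_nonneg_left (le_max_left _ _) (by positivity)
  linarith

lemma max_zero_eq (a : ℝ) : max a 0 = (a + |a|) / 2 := by
  rcases le_total 0 a with h | h
  · rw [max_eq_left h, abs_of_nonneg h]; ring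
  · rw [max_eq_right h, abs_of_nonpos h]; ring

lemma expectation_pos_part_le {Ω : Type*} [MeasurableSpace Ω] (μ : Measure Ω)
    [IsProbabilityMeasure μ] (Y : Ω → ℝ) (hY : MemLp Y 2 μ) (m σ t : ℝ)
    (hm : ∫ ω, Y ω ∂μ = m) (hv : variance Y μ = σ ^ 2) :
    ∫ ω, max (Y ω - t) 0 ∂μ ≤ ((m - t) + Real.sqrt (σ ^ 2 + (m - t) ^ 2)) / 2 := by
  have hZ : MemLp (fun ω => Y ω - t) 2 μ := hY.sub (memLp_const t)
  have hZint : Integrable (fun ω => Y ω - t) μ := hZ.integrable one_le_two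
  have hZm : ∫ ω, (Y ω - t) ∂μ = m - t := by
    rw [integral_sub (hY.integrable one_le_two) (integrable_const t), hm, integral_const]
    simp
  have hvarZ : variance (fun ω => Y ω - t) μ = σ ^ 2 := by
    rw [variance_eq_integral hZ.aemeasurable, ← hv, variance_eq_integral hY.aemeasurable]
    congr 1
    ext ω
    show (Y ω - t - ∫ ω, (Y ω - t) ∂μ) ^ 2 = (Y ω - ∫ ω, Y ω ∂μ) ^ 2
    rw [hZm, hm]
    ring
  have hZsq : ∫ ω, (Y ω - t) ^ 2 ∂μ = σ ^ 2 + (m - t) ^ 2 := by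
    have h := variance_eq_sub hZ
    simp only [Pi.pow_apply] at h
    rw [hvarZ, hZm] at h
    linarith
  have habs : ∫ ω, |Y ω - t| ∂μ ≤ Real.sqrt (σ ^ 2 + (m - t) ^ 2) := by
    have habs2 : MemLp (fun ω => |Y ω - t|) 2 μ := by
      simpa [Real.norm_eq_abs] using hZ.norm
    have hnn := variance_nonneg (fun ω => |Y ω - t|) μ
    rw [variance_eq_sub habs2] at hnn
    simp only [Pi.pow_apply, sq_abs] at hnn
    rw [hZsq] at hnn
    have h0 : 0 ≤ ∫ ω, |Y ω - t| ∂μ := integral_nonneg fun ω => abs_nonneg _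
    rw [Real.le_sqrt h0 (by positivity)]
    linarith
  have hmax : ∫ ω, max (Y ω - t) 0 ∂μ = ((∫ ω, (Y ω - t) ∂μ) + ∫ ω, |Y ω - t| ∂μ) / 2 := by
    simp_rw [max_zero_eq]
    rw [integral_div, integral_add hZint hZint.abs]
  rw [hmax, hZm]
  linarith

end OSB

/-- Distribution-free bound on expected order statistics: if `ψ₁, …, ψ_n` are i.i.d. with
mean `m` and variance `σ²`, the `l`-th largest order statistic satisfies
`E[ψ₍ₗ₎] ≤ m + σ·√((n−l)/l)`. -/
theorem expected_order_statistic_bound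
    {Ω : Type*} [MeasurableSpace Ω] (μ : Measure Ω) [IsProbabilityMeasure μ]
    (n : ℕ) (l : ℕ) (hl : 1 ≤ l) (hln : l ≤ n)
    (X : Fin n → Ω → ℝ)
    (hmeas : ∀ i, Measurable (X i))
    (hindep : iIndepFun X μ)
    (ν : Measure ℝ) (hiid : ∀ i, Measure.map (X i) μ = ν)
    (hL2 : ∀ i, MemLp (X i) 2 μ)
    (m σ : ℝ) (hσ : 0 ≤ σ)
    (hmean : ∀ i, (∫ ω, X i ω ∂μ) = m)
    (hvar : ∀ i, variance (X i) μ = σ ^ 2) :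
    (∫ ω, sortDesc (fun i => X i ω) ⟨l - 1, by omega⟩ ∂μ) ≤
      m + σ * Real.sqrt (((n : ℝ) - l) / l) := by
  classical
  have hk : l - 1 < n := by omega
  set S : Ω → ℝ := fun ω => sortDesc (fun i => X i ω) ⟨l - 1, hk⟩ with hS
  show (∫ ω, S ω ∂μ) ≤ m + σ * Real.sqrt (((n : ℝ) - l) / l)
  have hXint : ∀ i, Integrable (X i) μ := fun i => (hL2 i).integrable one_le_two
  have hSmeas : Measurable S :=
    (OSB.measurable_sortDesc ⟨l - 1, hk⟩).comp (measurable_pi_lambda _ hmeas)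
  have hSint : Integrable S μ := by
    have hbound : Integrable (fun ω => ∑ i, |X i ω|) μ :=
      integrable_finset_sum _ fun i _ => (hXint i).abs
    refine hbound.mono' hSmeas.aestronglyMeasurable (ae_of_all _ fun ω => ?_)
    rw [Real.norm_eq_abs]
    exact OSB.abs_sortDesc_le _ _
  have hl0 : (0:ℝ) < l := by exact_mod_cast hl
  -- the general bound for an arbitrary threshold t
  have hgen : ∀ t : ℝ, (∫ ω, S ω ∂μ)
      ≤ t + ((n:ℝ)/l) * (((m - t) + Real.sqrt (σ ^ 2 + (m - t) ^ 2)) / 2) := by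
    intro t
    have hmaxint : ∀ i : Fin n, Integrable (fun ω => max (X i ω - t) 0) μ := fun i => by
      simpa using ((hXint i).sub (integrable_const t)).pos_part
    have hRint : Integrable (fun ω => t + (1/(l:ℝ)) * ∑ i, max (X i ω - t) 0) μ :=
      (integrable_const t).add ((integrable_finset_sum _ fun i _ => hmaxint i).const_mul _)
    have hptw : ∀ ω, S ω ≤ t + (1/(l:ℝ)) * ∑ i, max (X i ω - t) 0 := by
      intro ω
      have h1 := OSB.mul_sortDesc_le (fun i => X i ω) l hl hln t
      have h2 : S ω - t ≤ (∑ i, max (X i ω - t) 0) / l :=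
        (le_div_iff₀ hl0).2 (by rw [mul_comm] at h1; exact h1)
      rw [one_div, inv_mul_eq_div]
      linarith
    have step1 : (∫ ω, S ω ∂μ) ≤ ∫ ω, (t + (1/(l:ℝ)) * ∑ i, max (X i ω - t) 0) ∂μ :=
      integral_mono hSint hRint hptw
    have step2 : ∫ ω, (t + (1/(l:ℝ)) * ∑ i, max (X i ω - t) 0) ∂μ
        = t + (1/(l:ℝ)) * ∑ i, ∫ ω, max (X i ω - t) 0 ∂μ := by
      rw [integral_add (integrable_const t)
        ((integrable_finset_sum _ fun i _ => hmaxint i).const_mul _),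
        integral_const, integral_const_mul,
        integral_finset_sum _ fun i _ => hmaxint i]
      simp
    have step3 : ∑ i, ∫ ω, max (X i ω - t) 0 ∂μ
        ≤ (n:ℝ) * (((m - t) + Real.sqrt (σ ^ 2 + (m - t) ^ 2)) / 2) := by
      calc ∑ i, ∫ ω, max (X i ω - t) 0 ∂μ
          ≤ ∑ _i : Fin n, (((m - t) + Real.sqrt (σ ^ 2 + (m - t) ^ 2)) / 2) :=
            Finset.sum_le_sum fun i _ =>
              OSB.expectation_pos_part_le μ (X i) (hL2 i) m σ t (hmean i) (hvar i)
        _ = (n:ℝ) * (((m - t) + Real.sqrt (σ ^ 2 + (m - t) ^ 2)) / 2) := by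
            rw [Finset.sum_const, Finset.card_univ, Fintype.card_fin, nsmul_eq_mul]
    have hmul : (1/(l:ℝ)) * ((n:ℝ) * (((m - t) + Real.sqrt (σ ^ 2 + (m - t) ^ 2)) / 2))
        = ((n:ℝ)/l) * (((m - t) + Real.sqrt (σ ^ 2 + (m - t) ^ 2)) / 2) := by
      ring
    have step4 : (1/(l:ℝ)) * ∑ i, ∫ ω, max (X i ω - t) 0 ∂μ
        ≤ (1/(l:ℝ)) * ((n:ℝ) * (((m - t) + Real.sqrt (σ ^ 2 + (m - t) ^ 2)) / 2)) :=
      mul_le_mul_of_nonneg_left step3 (by positivity)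
    rw [hmul] at step4
    linarith
  rcases eq_or_lt_of_le hln with hleq | hlt
  · -- l = n : the order statistic is the minimum, bounded by the mean
    subst hleq
    have hz : ((l:ℝ) - (l:ℕ)) / (l:ℕ) = 0 := by
      rw [sub_self, zero_div]
    rw [hz, Real.sqrt_zero, mul_zero, add_zero]
    have hpt : ∀ ω, S ω ≤ (1/(l:ℝ)) * ∑ i, X i ω := by
      intro ω
      set f : Fin l → ℝ := fun i => X i ω with hf
      have hmin : ∀ i : Fin l, S ω ≤ sortDesc f i := fun i =>
        OSB.sortDesc_antitone f (by simp [Fin.le_def]; omega)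
      have hsum : ∑ i, sortDesc f i = ∑ i, f i := OSB.sum_sortDesc f (fun x => x)
      have h1 : ∑ _i : Fin l, S ω ≤ ∑ i, sortDesc f i := Finset.sum_le_sum fun i _ => hmin i
      rw [Finset.sum_const, Finset.card_univ, Fintype.card_fin, nsmul_eq_mul, hsum] at h1
      have h2 : S ω ≤ (∑ i, f i) / l := (le_div_iff₀ hl0).2 (by rw [mul_comm] at h1; exact h1)
      rw [one_div, inv_mul_eq_div]
      exact h2
    have hRint : Integrable (fun ω => (1/(l:ℝ)) * ∑ i, X i ω) μ :=
      (integrable_finset_sum _ fun i _ => hXint i).const_mul _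
    have step1 : (∫ ω, S ω ∂μ) ≤ ∫ ω, (1/(l:ℝ)) * ∑ i, X i ω ∂μ :=
      integral_mono hSint hRint hpt
    have step2 : ∫ ω, (1/(l:ℝ)) * ∑ i, X i ω ∂μ = m := by
      rw [integral_const_mul, integral_finset_sum _ fun i _ => hXint i]
      simp_rw [hmean]
      rw [Finset.sum_const, Finset.card_univ, Fintype.card_fin, nsmul_eq_mul]
      field_simp
    linarith
  · -- l < n : optimize the threshold
    have hnl0 : (0:ℝ) < (n:ℝ) - l := by
      have : (l:ℝ) < n := by exact_mod_cast hlt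
      linarith
    set r : ℝ := Real.sqrt ((l:ℝ) * ((n:ℝ) - l)) with hrdef
    have hr0 : 0 < r := Real.sqrt_pos.2 (by positivity)
    have hr2 : r ^ 2 = (l:ℝ) * ((n:ℝ) - l) := Real.sq_sqrt (by positivity)
    set δ : ℝ := σ * ((n:ℝ) - 2*l) / (2*r) with hδ
    have key := hgen (m + δ)
    have hmt : m - (m + δ) = -δ := by ring
    rw [hmt] at key
    have hsqrt : Real.sqrt (σ^2 + (-δ)^2) = σ * n / (2*r) := by
      have h1 : σ^2 + (-δ)^2 = (σ * (n:ℝ) / (2*r))^2 := by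
        rw [hδ]
        field_simp
        nlinarith [hr2, sq_nonneg σ]
      rw [h1, Real.sqrt_sq (by positivity)]
    rw [hsqrt] at key
    have hs2 : Real.sqrt (((n:ℝ) - l)/l) = ((n:ℝ) - l) / r := by
      have h1 : ((n:ℝ) - l)/l = (((n:ℝ) - l) / r)^2 := by
        rw [div_pow, hr2]
        field_simp
      rw [h1, Real.sqrt_sq (by positivity)]
    rw [hs2]
    have hfinal : m + δ + ((n:ℝ)/l) * ((-δ + σ * (n:ℝ) / (2*r)) / 2)
        = m + σ * (((n:ℝ) - l) / r) := by
      rw [hδ]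
      field_simp
      ring
    linarith
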